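/- The inference rule 'from the premises {φ → τ(φ) | φ ∈ X} derive ⟪C:X⟫_s → ⟪C:τ(X)⟫_s' is derivable for any function τ : Φ → Φ: if ⊢ φ → τ(φ) for each φ ∈ X, then ⊢ ⟪C:X⟫_s → ⟪C:τ(X)⟫_s. -/

import Mathlib

/-- Formulas of the language Φ, over a set `A` of agents, with propositional
variables indexed by `ℕ`.  `dil C X s` is the ethical-dilemma modality `[C:X]_s`,
where the finite set `X` of formulae is represented by a list. -/
inductive Fm (A : Type) : Type
  | var : ℕ → Fm A
  | neg : Fm A → Fm A
  | imp : Fm A → Fm A → Fm A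
  | dil : Set A → List (Fm A) → (A → ℝ) → Fm A

namespace Fm

variable {A : Type}

/-- Truth ⊤. -/
def top : Fm A := imp (var 0) (var 0)

/-- Falsehood ⊥. -/
def bot : Fm A := neg top

/-- Conjunction, defined as usual. -/
def conj (φ ψ : Fm A) : Fm A := neg (imp φ (neg ψ))

/-- Disjunction, defined as usual. -/
def disj (φ ψ : Fm A) : Fm A := imp (neg φ) ψ

/-- Disjunction of all formulae in a list (`∨∅ = ⊥`). -/
def bigOr : List (Fm A) → Fm A
  | [] => bot
  | φ :: rest => disj φ (bigOr rest)

/-- Conjunction of all formulae in a list (`∧∅ = ⊤`). -/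
def bigAnd : List (Fm A) → Fm A
  | [] => top
  | φ :: rest => conj φ (bigAnd rest)

/-- `X ⊗ Y = {φ ∧ ψ | φ ∈ X, ψ ∈ Y}`. -/
def otimes (X Y : List (Fm A)) : List (Fm A) :=
  X.flatMap fun φ => Y.map fun ψ => conj φ ψ

/-- `X₁ ⊗ X₂ ⊗ ⋯ ⊗ Xₙ`, which is `{⊤}` for `n = 0` and `X₁` for `n = 1`. -/
def bigOtimes : List (List (Fm A)) → List (Fm A)
  | [] => [top]
  | X :: rest => rest.foldl otimes X

/-- The weak dilemma `⟪C:X⟫_s`, i.e. the disjunction `⋁_{∅ ≠ Z ⊆ X} [C:Z]_s`. -/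
def wdil (C : Set A) (X : List (Fm A)) (s : A → ℝ) : Fm A :=
  bigOr (((X.sublists).filter fun Z => !Z.isEmpty).map fun Z => dil C Z s)

/-- A propositional tautology in the language Φ: a formula that evaluates to true
under every Boolean valuation that respects negation and implication (treating
variables and dilemma formulae as atoms). -/
def Tautology (φ : Fm A) : Prop :=
  ∀ v : Fm A → Bool,
    (∀ ψ, v (neg ψ) = !v ψ) →
    (∀ ψ χ, v (imp ψ χ) = (!v ψ || v χ)) →
    v φ = true

/-- Derivability `⊢ φ` in the logical system: all propositional tautologies,
the Combination, Monotonicity, Minimality and No Alternatives axioms, and the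
Modus Ponens, Necessitation and Substitution inference rules. -/
inductive Derives : Fm A → Prop
  | taut {φ : Fm A} : Tautology φ → Derives φ
  | comb {C : Set A} {X Y : List (Fm A)} {s : A → ℝ} :
      C.Nonempty → X ≠ [] → Y ≠ [] →
      Derives (imp (dil C X s) (imp (dil C Y s) (wdil C (otimes X Y) s)))
  | mono {C D : Set A} {X : List (Fm A)} {s s' : A → ℝ} :
      C.Nonempty → C ⊆ D → X ≠ [] → (∀ a, s a ≤ s' a) →
      Derives (imp (dil C X s') (wdil D X s))
  | minim {C : Set A} {X Y : List (Fm A)} {s : A → ℝ} :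
      C.Nonempty → Y ≠ [] → {ψ | ψ ∈ Y} ⊂ {ψ | ψ ∈ X} →
      Derives (imp (dil C X s) (neg (dil C Y s)))
  | noalt {C D : Set A} {X : List (Fm A)} {s : A → ℝ} :
      C.Nonempty → D.Nonempty → (∃ φ, {ψ | ψ ∈ X} = {φ}) →
      Derives (imp (dil C X s) (dil D X s))
  | mp {φ ψ : Fm A} : Derives φ → Derives (imp φ ψ) → Derives ψ
  | nec {φ : Fm A} {C : Set A} {s : A → ℝ} :
      C.Nonempty → Derives φ → Derives (dil C [φ] s)
  | subst {C : Set A} {X : List (Fm A)} {s : A → ℝ} {τ : Fm A → Fm A} :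
      C.Nonempty → X ≠ [] → (∀ φ ∈ X, Derives (imp φ (τ φ))) →
      Derives (imp (dil C X s) (wdil C (X.map τ) s))

/-- `Γ ⊢ φ`: provable from the theorems of the system and the additional set of
formulae `Γ` using the Modus Ponens inference rule only. -/
inductive DerivesFrom (Γ : Set (Fm A)) : Fm A → Prop
  | thm {φ : Fm A} : Derives φ → DerivesFrom Γ φ
  | hyp {φ : Fm A} : φ ∈ Γ → DerivesFrom Γ φ
  | mp {φ ψ : Fm A} : DerivesFrom Γ φ → DerivesFrom Γ (imp φ ψ) → DerivesFrom Γ ψ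

end Fm

/-- A game `(W, Δ, |·|, M, π)`. -/
structure Game (A : Type) where
  /-- the set of states -/
  W : Type
  /-- the nonempty set Δ of actions -/
  St : Type
  st_nonempty : Nonempty St
  /-- `cost d a w` is the cost `|d|ᵃ_w` of action `d` for agent `a` in state `w` -/
  cost : St → A → W → ℝ
  /-- the mechanism `M ⊆ W × Δ^𝒜 × W` -/
  M : W → (A → St) → W → Prop
  /-- valuation of propositional variables -/
  pi : ℕ → Set W

namespace Game

variable {A : Type}

/-- Satisfaction `w ⊩ φ` (as `Sat G φ w`). -/
def Sat (G : Game A) : Fm A → G.W → Prop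
  | .var p, w => w ∈ G.pi p
  | .neg φ, w => ¬ Sat G φ w
  | .imp φ ψ, w => ¬ Sat G φ w ∨ Sat G ψ w
  | .dil C X s, w =>
      (∀ t : ↥C → G.St, ∃ φ, ∃ _ : φ ∈ X,
          ∀ (δ : A → G.St) (u : G.W),
            (∀ a : A, G.cost (δ a) a w ≤ s a) → (∀ a : ↥C, t a = δ a.1) →
            G.M w δ u → Sat G φ u) ∧
      (∀ Y : Set (Fm A), Y.Nonempty → Y ⊂ {ψ | ψ ∈ X} →
          ∃ t : ↥C → G.St, ∀ φ, ∀ _ : φ ∈ Y,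
            ∃ (δ : A → G.St) (u : G.W),
              (∀ a : A, G.cost (δ a) a w ≤ s a) ∧ (∀ a : ↥C, t a = δ a.1) ∧
              G.M w δ u ∧ ¬ Sat G φ u)
termination_by φ _ => sizeOf φ
decreasing_by
  all_goals
    first
      | (simp <;> omega)
      | (have h1 : sizeOf φ < sizeOf X := List.sizeOf_lt_of_mem ‹φ ∈ X›
         simp <;> omega)
      | (have hX : φ ∈ X := by
           have := (‹Y ⊂ {ψ | ψ ∈ X}›.1) ‹φ ∈ Y›
           simpa using this
         have h1 : sizeOf φ < sizeOf X := List.sizeOf_lt_of_mem hX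
         simp <;> omega)

end Game

namespace Fm

variable {A : Type}

/-- A set of formulae is consistent if ⊥ is not provable from it. -/
def Consistent (Γ : Set (Fm A)) : Prop := ¬ DerivesFrom Γ bot

/-- A maximal consistent set of formulae. -/
def MCS (Γ : Set (Fm A)) : Prop :=
  Consistent Γ ∧ ∀ φ : Fm A, φ ∉ Γ → ¬ Consistent (insert φ Γ)

end Fm

/-- The canonical game: states are maximal consistent sets, actions are pairs
`(Ψ, c)` of a set of "demanded" formulae and an offered price `c`. -/
def canonicalGame (A : Type) : Game A where
  W := {Γ : Set (Fm A) // Fm.MCS Γ}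
  St := Set (Fm A) × ℝ
  st_nonempty := ⟨(∅, 0)⟩
  cost := fun d _ _ => d.2
  M := fun w δ u =>
    (∀ a : A, (δ a).1 ⊆ u.1) ∧
    ∀ (C : Set A) (X : List (Fm A)) (s : A → ℝ),
      C.Nonempty → X ≠ [] → Fm.wdil C X s ∈ w.1 → (∀ a : A, (δ a).2 ≤ s a) →
      ∃ a ∈ C, ∃ φ ∈ (δ a).1, φ ∈ X
  pi := fun p => {w | Fm.var p ∈ w.1}

namespace Fm

variable {A : Type}

lemma v_bigOr (v : Fm A → Bool)
    (hn : ∀ ψ, v (neg ψ) = !v ψ)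
    (hi : ∀ ψ χ, v (imp ψ χ) = (!v ψ || v χ)) :
    ∀ L : List (Fm A), v (bigOr L) = L.any v := by
  intro L
  induction L with
  | nil =>
      simp [bigOr, bot, top, hn, hi]
  | cons d rest ih =>
      simp [bigOr, disj, hn, hi, ih]

lemma taut_imp_bigOr_of_subset {L1 L2 : List (Fm A)} (hsub : ∀ d ∈ L1, d ∈ L2) :
    Tautology (imp (bigOr L1) (bigOr L2)) := by
  intro v hn hi
  rw [hi, v_bigOr v hn hi, v_bigOr v hn hi]
  by_cases h1 : L1.any v = true
  · obtain ⟨d, hd, hvd⟩ := List.any_eq_true.mp h1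
    have : L2.any v = true := List.any_eq_true.mpr ⟨d, hsub d hd, hvd⟩
    simp [this]
  · simp [h1]

lemma derives_syll {a b c : Fm A} (h1 : Derives (imp a b)) (h2 : Derives (imp b c)) :
    Derives (imp a c) := by
  have ht : Tautology (imp (imp a b) (imp (imp b c) (imp a c))) := by
    intro v hn hi
    simp only [hi]
    cases v a <;> cases v b <;> cases v c <;> rfl
  exact (Derives.mp h2 (Derives.mp h1 (Derives.taut ht)))

lemma derives_bigOr_elim {L : List (Fm A)} {G : Fm A}
    (h : ∀ d ∈ L, Derives (imp d G)) : Derives (imp (bigOr L) G) := by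
  induction L with
  | nil =>
      apply Derives.taut
      intro v hn hi
      have hb : v (bigOr ([] : List (Fm A))) = false := by
        rw [v_bigOr v hn hi]; rfl
      rw [hi, hb]; rfl
  | cons d rest ih =>
      have hd : Derives (imp d G) := h d List.mem_cons_self
      have hrest : Derives (imp (bigOr rest) G) :=
        ih (fun e he => h e (List.mem_cons_of_mem d he))
      have ht : Tautology (imp (imp d G)
          (imp (imp (bigOr rest) G) (imp (bigOr (d :: rest)) G))) := by
        intro v hn hi
        have : v (bigOr (d :: rest)) = (v d || v (bigOr rest)) := by
          simp [bigOr, disj, hn, hi]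
        simp only [hi, this]
        cases v d <;> cases v (bigOr rest) <;> cases v G <;> rfl
      exact Derives.mp hrest (Derives.mp hd (Derives.taut ht))

end Fm

/-- The rule `from {φ → τ(φ) | φ ∈ X} derive ⟪C:X⟫_s → ⟪C:τ(X)⟫_s` is derivable. -/
theorem wdil_substitution {A : Type} [Nonempty A] (C : Set A) (hC : C.Nonempty)
    (X : List (Fm A)) (hX : X ≠ []) (s : A → ℝ) (τ : Fm A → Fm A)
    (h : ∀ φ ∈ X, Fm.Derives (Fm.imp φ (τ φ))) :
    Fm.Derives (Fm.imp (Fm.wdil C X s) (Fm.wdil C (X.map τ) s)) := by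
  rw [show Fm.wdil C X s =
      Fm.bigOr (((X.sublists).filter fun Z => !Z.isEmpty).map fun Z => Fm.dil C Z s) from rfl]
  apply Fm.derives_bigOr_elim
  intro d hd
  obtain ⟨Z, hZ, rfl⟩ := List.mem_map.mp hd
  obtain ⟨hZs, hZne'⟩ := List.mem_filter.mp hZ
  have hZsub : Z.Sublist X := List.mem_sublists.mp hZs
  have hZne : Z ≠ [] := by
    intro hcon; subst hcon; simp at hZne'
  have step1 : Fm.Derives (Fm.imp (Fm.dil C Z s) (Fm.wdil C (Z.map τ) s)) :=
    Fm.Derives.subst hC hZne (fun φ hφ => h φ (hZsub.subset hφ))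
  have step2 : Fm.Tautology (Fm.imp (Fm.wdil C (Z.map τ) s) (Fm.wdil C (X.map τ) s)) := by
    apply Fm.taut_imp_bigOr_of_subset
    intro e he
    obtain ⟨W, hW, rfl⟩ := List.mem_map.mp he
    obtain ⟨hWs, hWne⟩ := List.mem_filter.mp hW
    have hWsub : W.Sublist (X.map τ) :=
      (List.mem_sublists.mp hWs).trans (hZsub.map τ)
    exact List.mem_map.mpr ⟨W, List.mem_filter.mpr ⟨List.mem_sublists.mpr hWsub, hWne⟩, rfl⟩
  exact Fm.derives_syll step1 (Fm.Derives.taut step2)
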